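/- Let σ : ℝ → ℝ be the logistic function σ(z) = (1 + exp(−z))⁻¹. Let T > 0, A ∈ ℝ, p ≥ 0 be real constants, and let β : ℝ → ℝ be differentiable with supremum of (p/T)·|β′(ε)| over ε ∈ [0,1] strictly less than 4. Define Φ(ε) = σ((A − p·β(ε))/T). Then Φ maps [0,1] into [0,1], Φ is Lipschitz on [0,1] with a Lipschitz constant strictly less than 1, and Φ has exactly one fixed point in [0,1]. -/

import Mathlib

open Set

/-- The logistic function `σ(z) = (1 + exp (−z))⁻¹`. -/
noncomputable def logistic (z : ℝ) : ℝ := (1 + Real.exp (-z))⁻¹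

lemma logistic_hasDerivAt (z : ℝ) :
    HasDerivAt logistic (Real.exp (-z) / (1 + Real.exp (-z))^2) z := by
  have h1 : HasDerivAt (fun z : ℝ => 1 + Real.exp (-z)) (-Real.exp (-z)) z := by
    simpa using ((Real.hasDerivAt_exp (-z)).comp z (hasDerivAt_neg z)).const_add 1
  have hne : (1 + Real.exp (-z)) ≠ 0 := by positivity
  have := h1.inv hne
  exact this.congr_deriv (by ring)

lemma logistic_deriv_nonneg (z : ℝ) : 0 ≤ Real.exp (-z) / (1 + Real.exp (-z))^2 := by
  positivity

lemma logistic_deriv_le (z : ℝ) : Real.exp (-z) / (1 + Real.exp (-z))^2 ≤ 1/4 := by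
  have h : 0 < Real.exp (-z) := Real.exp_pos _
  rw [div_le_iff₀ (by positivity)]
  nlinarith [sq_nonneg (1 - Real.exp (-z))]

lemma logistic_mem (z : ℝ) : logistic z ∈ Icc (0:ℝ) 1 := by
  have h : 0 < Real.exp (-z) := Real.exp_pos _
  constructor
  · unfold logistic; positivity
  · unfold logistic
    apply inv_le_one_of_one_le₀
    linarith

/-- Sufficient condition for uniqueness of the dispute-game equilibrium.
If the supremum of `(p/T)·|β′(ε)|` over `ε ∈ [0,1]` is strictly less than `4`
(witnessed by a bound `L < 4`), then the fixed-point map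
`Φ(ε) = σ((A − p·β(ε))/T)` maps `[0,1]` into `[0,1]`, is Lipschitz on `[0,1]`
with some constant `K < 1`, and has exactly one fixed point in `[0,1]`. -/
theorem dispute_game_equilibrium_unique
    (T : ℝ) (hT : 0 < T) (A : ℝ) (p : ℝ) (hp : 0 ≤ p)
    (β : ℝ → ℝ) (hβ : Differentiable ℝ β)
    (L : ℝ) (hL : L < 4)
    (hsup : ∀ ε ∈ Icc (0 : ℝ) 1, p / T * |deriv β ε| ≤ L)
    (Φ : ℝ → ℝ) (hΦ : ∀ ε, Φ ε = logistic ((A - p * β ε) / T)) :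
    MapsTo Φ (Icc 0 1) (Icc 0 1) ∧
      (∃ K : NNReal, K < 1 ∧ LipschitzOnWith K Φ (Icc 0 1)) ∧
      ∃! εstar, εstar ∈ Icc (0 : ℝ) 1 ∧ Φ εstar = εstar := by
  have hΦfun : Φ = fun ε => logistic ((A - p * β ε) / T) := funext hΦ
  -- derivative of Φ
  have hd : ∀ ε : ℝ, HasDerivAt Φ
      (Real.exp (-((A - p * β ε) / T)) / (1 + Real.exp (-((A - p * β ε) / T)))^2
        * (-p * deriv β ε / T)) ε := by
    intro ε
    have hin : HasDerivAt (fun ε => (A - p * β ε) / T) (-p * deriv β ε / T) ε := by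
      have hb : HasDerivAt β (deriv β ε) ε := (hβ ε).hasDerivAt
      have : HasDerivAt (fun ε => A - p * β ε) (-(p * deriv β ε)) ε :=
        ((hb.const_mul p).const_sub A)
      have := this.div_const T
      exact this.congr_deriv (by ring)
    rw [hΦfun]
    exact (logistic_hasDerivAt _).comp ε hin
  -- bound on the derivative on [0,1]
  have hbound : ∀ ε ∈ Icc (0:ℝ) 1, |deriv Φ ε| ≤ L / 4 := by
    intro ε hε
    rw [(hd ε).deriv]
    set z := (A - p * β ε) / T
    have h1 : 0 ≤ Real.exp (-z) / (1 + Real.exp (-z))^2 := logistic_deriv_nonneg z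
    have h2 : Real.exp (-z) / (1 + Real.exp (-z))^2 ≤ 1/4 := logistic_deriv_le z
    have h3 : p / T * |deriv β ε| ≤ L := hsup ε hε
    have h4 : 0 ≤ p / T * |deriv β ε| := by positivity
    rw [abs_mul, abs_of_nonneg h1]
    have h5 : |(-p * deriv β ε / T)| = p / T * |deriv β ε| := by
      rw [abs_div, abs_mul, abs_neg, abs_of_nonneg hp, abs_of_pos hT]
      ring
    rw [h5]
    calc Real.exp (-z) / (1 + Real.exp (-z))^2 * (p / T * |deriv β ε|)
        ≤ 1/4 * (p / T * |deriv β ε|) := by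
          exact mul_le_mul_of_nonneg_right h2 h4
      _ ≤ 1/4 * L := by linarith
      _ = L / 4 := by ring
  have hΦdiff : ∀ ε : ℝ, DifferentiableAt ℝ Φ ε := fun ε => (hd ε).differentiableAt
  have hΦcont : Continuous Φ := continuous_iff_continuousAt.2
    fun x => (hΦdiff x).continuousAt
  -- maps to
  have hmaps : MapsTo Φ (Icc 0 1) (Icc 0 1) := by
    intro x _
    rw [hΦ x]; exact logistic_mem _
  refine ⟨hmaps, ?_, ?_⟩
  · -- Lipschitz
    refine ⟨Real.toNNReal (L/4), ?_, ?_⟩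
    · rw [← Real.toNNReal_one, Real.toNNReal_lt_toNNReal_iff (by norm_num)]
      linarith
    · apply LipschitzOnWith.of_dist_le_mul
      intro x hx y hy
      have := Convex.norm_image_sub_le_of_norm_deriv_le (fun z hz => hΦdiff z)
        (fun z hz => (by simpa [Real.norm_eq_abs] using hbound z hz)) (convex_Icc 0 1) hy hx
      simp only [Real.dist_eq, Real.norm_eq_abs] at this ⊢
      have hL4 : (Real.toNNReal (L/4) : ℝ) = max (L/4) 0 := by
        simp [Real.coe_toNNReal']
      rw [hL4]
      calc |Φ x - Φ y| ≤ L/4 * |x - y| := this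
        _ ≤ max (L/4) 0 * |x - y| :=
            mul_le_mul_of_nonneg_right (le_max_left _ _) (abs_nonneg _)
  · -- unique fixed point
    have hL0 : 0 ≤ L := le_trans (by positivity) (hsup 0 ⟨le_refl 0, zero_le_one⟩)
    -- existence via IVT
    have hg : ContinuousOn (fun x => Φ x - x) (Icc 0 1) :=
      (hΦcont.sub continuous_id).continuousOn
    have h0 : (0:ℝ) ∈ Icc ((fun x => Φ x - x) 1) ((fun x => Φ x - x) 0) := by
      have h1 := hmaps (left_mem_Icc.2 zero_le_one)
      have h2 := hmaps (right_mem_Icc.2 zero_le_one)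
      simp only [mem_Icc] at h1 h2 ⊢
      constructor <;> simp <;> linarith [h1.1, h2.2]
    obtain ⟨c, hc, hc0⟩ := intermediate_value_Icc' zero_le_one hg h0
    refine ⟨c, ⟨hc, by dsimp at hc0; linarith⟩, ?_⟩
    -- uniqueness
    rintro y ⟨hy, hyfix⟩
    have hcfix : Φ c = c := by dsimp at hc0; linarith
    have := Convex.norm_image_sub_le_of_norm_deriv_le (fun z hz => hΦdiff z)
      (fun z hz => (by simpa [Real.norm_eq_abs] using hbound z hz)) (convex_Icc 0 1) hc hy
    rw [hyfix, hcfix] at this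
    simp only [Real.norm_eq_abs] at this
    by_contra hne
    have habs : 0 < |y - c| := abs_pos.2 (sub_ne_zero.2 hne)
    nlinarith [this]
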